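/- arXiv:2412.14689 — 2 statements merged into one kernel-verified Lean document; each statement's English description precedes it below -/
import Mathlib

section
/- Under the iterative data editing process, the edited targets satisfy the expansion Ỹ_{n+1} = X w* + E_1 + Σ_{i=1}^{n} M_i ( X (ŵ_i − w*) + (E_{i+1} − E_1) ). -/
open Matrix Finset

/-- An editing matrix: a real T×T diagonal matrix whose diagonal entries are all 0 or 1. -/
def IsEditingMatrix {T : ℕ} (M : Matrix (Fin T) (Fin T) ℝ) : Prop :=
  ∃ f : Fin T → ℝ, (∀ i, f i = 0 ∨ f i = 1) ∧ M = Matrix.diagonal f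

/-- under the iterative data editing process, the edited targets satisfy
`Ỹ_{n+1} = X w* + E 1 + ∑_{i=1}^n M i (X (ŵ_i − w*) + (E (i+1) − E 1))`. -/
theorem edited_targets_expansion
    (T d n : ℕ) (hT : 0 < T) (hd : 0 < d) (hn : 0 < n)
    (X : Matrix (Fin T) (Fin d) ℝ) (hX : IsUnit (Xᵀ * X).det)
    (wstar : Fin d → ℝ)
    (E : ℕ → Fin T → ℝ)
    (M : ℕ → Matrix (Fin T) (Fin T) ℝ)
    (hM : ∀ i, 1 ≤ i → i ≤ n → IsEditingMatrix (M i))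
    (hMdisj : ∀ i j, 1 ≤ i → i ≤ n → 1 ≤ j → j ≤ n → i ≠ j → M i * M j = 0)
    (Ytil : ℕ → Fin T → ℝ) (what : ℕ → Fin d → ℝ)
    (hY1 : Ytil 1 = X *ᵥ wstar + E 1)
    (hw : ∀ k, 1 ≤ k → k ≤ n + 1 → what k = (Xᵀ * X)⁻¹ *ᵥ (Xᵀ *ᵥ Ytil k))
    (hYrec : ∀ k, 1 ≤ k → k ≤ n →
      Ytil (k + 1) = (M k) *ᵥ (X *ᵥ what k + E (k + 1)) + (1 - M k) *ᵥ Ytil k) :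
    Ytil (n + 1) =
      X *ᵥ wstar + E 1 +
        ∑ i ∈ Finset.Icc 1 n, (M i) *ᵥ (X *ᵥ (what i - wstar) + (E (i + 1) - E 1)) := by
  have key : ∀ m, m ≤ n → Ytil (m + 1) =
      X *ᵥ wstar + E 1 +
        ∑ i ∈ Finset.Icc 1 m, (M i) *ᵥ (X *ᵥ (what i - wstar) + (E (i + 1) - E 1)) := by
    intro m
    induction m with
    | zero => intro _; simp [hY1]
    | succ m ih =>
      intro hm
      have hm' : m ≤ n := Nat.le_of_succ_le hm
      have ihm := ih hm'
      have hrec := hYrec (m + 1) (Nat.succ_le_succ (Nat.zero_le m)) hm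
      have hMsum : M (m + 1) *ᵥ Ytil (m + 1) = M (m + 1) *ᵥ (X *ᵥ wstar + E 1) := by
        rw [ihm, Matrix.mulVec_add]
        have : M (m + 1) *ᵥ
            (∑ i ∈ Finset.Icc 1 m, (M i) *ᵥ (X *ᵥ (what i - wstar) + (E (i + 1) - E 1))) = 0 := by
          rw [show (M (m + 1)) *ᵥ
              (∑ i ∈ Finset.Icc 1 m, (M i) *ᵥ (X *ᵥ (what i - wstar) + (E (i + 1) - E 1))) =
              ∑ i ∈ Finset.Icc 1 m,
                (M (m + 1)) *ᵥ ((M i) *ᵥ (X *ᵥ (what i - wstar) + (E (i + 1) - E 1))) from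
            map_sum (M (m + 1)).mulVecLin _ _]
          refine Finset.sum_eq_zero fun i hi => ?_
          obtain ⟨hi1, hi2⟩ := Finset.mem_Icc.mp hi
          rw [Matrix.mulVec_mulVec,
            hMdisj (m + 1) i (Nat.succ_le_succ (Nat.zero_le m)) hm hi1 (hi2.trans hm')
              (by omega), Matrix.zero_mulVec]
        rw [this, add_zero]
      rw [hrec, Matrix.sub_mulVec, Matrix.one_mulVec, hMsum, ihm,
        Finset.sum_Icc_succ_top (Nat.succ_le_succ (Nat.zero_le m))]
      simp only [Matrix.mulVec_add, Matrix.mulVec_sub, Nat.succ_eq_add_one, Nat.zero_add]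
      abel
  exact key n le_rfl
end

section
/- Let X be a real T×d matrix with XᵀX invertible, and let M_1,…,M_n be editing matrices (T×T diagonal with 0/1 diagonal entries). Let E_1,…,E_{n+1} be mutually independent random vectors in ℝ^T, each with i.i.d. coordinates distributed N(0, σ²). Then E[ ‖(XᵀX)⁻¹ Xᵀ ( E_1 + Σ_{i=1}^{n} M_i E_{i+1} )‖² ] = σ² · tr( (XᵀX)⁻¹ ) + σ² · Σ_{i=1}^{n} tr( X (XᵀX)⁻² Xᵀ M_i ). -/
open Matrix Finset MeasureTheory ProbabilityTheory
open Real
open scoped NNReal ENNReal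

lemma int_sq_exp (b : ℝ) (hb : 0 < b) :
    ∫ x : ℝ, x ^ 2 * Real.exp (-b * x ^ 2) = b ^ (-(3:ℝ)/2) * (Real.sqrt π / 2) := by
  have h : (fun x : ℝ => x ^ 2 * Real.exp (-b * x ^ 2))
      = fun x : ℝ => |x| ^ 2 * Real.exp (-b * |x| ^ 2) := by
    funext x; rw [sq_abs]
  calc ∫ x : ℝ, x ^ 2 * Real.exp (-b * x ^ 2)
      = ∫ x : ℝ, |x| ^ 2 * Real.exp (-b * |x| ^ 2) := by rw [h]
    _ = 2 * ∫ x in Set.Ioi (0:ℝ), x ^ 2 * Real.exp (-b * x ^ 2) :=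
        integral_comp_abs (f := fun x => x ^ 2 * Real.exp (-b * x ^ 2))
    _ = 2 * ∫ x in Set.Ioi (0:ℝ), x ^ (2:ℝ) * Real.exp (-b * x ^ (2:ℝ)) := by
        norm_num [Real.rpow_natCast]
    _ = 2 * (b ^ (-((2:ℝ) + 1) / 2) * (1 / 2) * Real.Gamma (((2:ℝ) + 1) / 2)) := by
        rw [integral_rpow_mul_exp_neg_mul_rpow (by norm_num) (by norm_num) hb]
    _ = b ^ (-(3:ℝ)/2) * (Real.sqrt π / 2) := by
        have h32 : ((2:ℝ) + 1) / 2 = 1/2 + 1 := by norm_num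
        rw [h32, Real.Gamma_add_one (by norm_num), Real.Gamma_one_half_eq]
        norm_num
        ring

lemma int_pow_exp (s : ℕ) {b : ℝ} (hb : 0 < b) :
    Integrable (fun x : ℝ => x ^ s * Real.exp (-b * x ^ 2)) := by
  have h := integrable_rpow_mul_exp_neg_mul_sq hb
    (s := (s : ℝ)) (lt_of_lt_of_le neg_one_lt_zero (Nat.cast_nonneg s))
  simpa [Real.rpow_natCast] using h

lemma gauss_integral_eq (v : NNReal) (hv : v ≠ 0) (g : ℝ → ℝ) :
    ∫ x, g x ∂(gaussianReal 0 v) = ∫ x, gaussianPDFReal 0 v x * g x := by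
  rw [gaussianReal_of_var_ne_zero 0 hv, gaussianPDF_def]
  have h : (fun x => ENNReal.ofReal (gaussianPDFReal 0 v x))
      = fun x => ((Real.toNNReal (gaussianPDFReal 0 v x) : ℝ≥0) : ℝ≥0∞) := rfl
  rw [h, integral_withDensity_eq_integral_smul ((measurable_gaussianPDFReal 0 v).real_toNNReal)]
  congr 1; funext x
  simp [NNReal.smul_def, Real.coe_toNNReal _ (gaussianPDFReal_nonneg 0 v x)]

lemma pdf_eq (v : NNReal) :
    gaussianPDFReal 0 v = fun x =>
      (Real.sqrt (2 * π * v))⁻¹ * Real.exp (-(2 * (v:ℝ))⁻¹ * x ^ 2) := by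
  funext x
  rw [gaussianPDFReal, sub_zero]
  congr 1
  by_cases h : (v:ℝ) = 0
  · simp [h]
  · field_simp

lemma gauss_integrable_pow (v : NNReal) (hv : v ≠ 0) (s : ℕ) :
    Integrable (fun x : ℝ => x ^ s) (gaussianReal 0 v) := by
  have ht : (0:ℝ) < v := by positivity
  have hb : (0:ℝ) < (2 * (v:ℝ))⁻¹ := by positivity
  rw [gaussianReal_of_var_ne_zero 0 hv]
  rw [integrable_withDensity_iff (measurable_gaussianPDF 0 v)
    (ae_of_all _ fun x => ENNReal.ofReal_lt_top)]
  have h : (fun x : ℝ => x ^ s * (gaussianPDF 0 v x).toReal)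
      = fun x : ℝ => (Real.sqrt (2 * π * v))⁻¹ * (x ^ s * Real.exp (-(2 * (v:ℝ))⁻¹ * x ^ 2)) := by
    funext x
    rw [gaussianPDF, ENNReal.toReal_ofReal (gaussianPDFReal_nonneg 0 v x), pdf_eq v]
    ring
  rw [h]
  exact (int_pow_exp s hb).const_mul _

lemma gauss_m2 (v : NNReal) (hv : v ≠ 0) :
    ∫ x, x ^ 2 ∂(gaussianReal 0 v) = (v : ℝ) := by
  have ht : (0:ℝ) < v := by positivity
  have hb : (0:ℝ) < (2 * (v:ℝ))⁻¹ := by positivity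
  rw [gauss_integral_eq v hv, pdf_eq v]
  have h : (fun x : ℝ => (Real.sqrt (2 * π * v))⁻¹ * Real.exp (-(2 * (v:ℝ))⁻¹ * x ^ 2) * x ^ 2)
      = fun x : ℝ => (Real.sqrt (2 * π * v))⁻¹ * (x ^ 2 * Real.exp (-(2 * (v:ℝ))⁻¹ * x ^ 2)) := by
    funext x; ring
  rw [h, integral_const_mul, int_sq_exp _ hb]
  -- now pure real computation
  have h2t : (0:ℝ) < 2 * (v:ℝ) := by positivity
  have h1 : ∀ t : ℝ, 0 < t → (t⁻¹) ^ (-(3:ℝ)/2) = t * Real.sqrt t := by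
    intro t ht'
    rw [← Real.rpow_neg_one t, ← Real.rpow_mul (le_of_lt ht')]
    norm_num
    rw [Real.sqrt_eq_rpow, ← Real.rpow_one_add' (le_of_lt ht') (by norm_num)]
    norm_num
  rw [h1 _ h2t]
  have hpi : 2 * π * (v:ℝ) = (2 * (v:ℝ)) * π := by ring
  rw [hpi, Real.sqrt_mul (le_of_lt h2t) π]
  have hs1 : (0:ℝ) < Real.sqrt (2 * (v:ℝ)) := Real.sqrt_pos.mpr h2t
  have hs2 : (0:ℝ) < Real.sqrt π := Real.sqrt_pos.mpr pi_pos
  field_simp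

lemma gauss_m1 (v : NNReal) (hv : v ≠ 0) :
    ∫ x, x ∂(gaussianReal 0 v) = 0 := by
  have ht : (0:ℝ) < v := by positivity
  have hb : (0:ℝ) < (2 * (v:ℝ))⁻¹ := by positivity
  rw [gauss_integral_eq v hv]
  set F : ℝ → ℝ := fun x => gaussianPDFReal 0 v x * x with hF
  have hFint : Integrable F := by
    have h : F = fun x : ℝ =>
        (Real.sqrt (2 * π * v))⁻¹ * (x ^ 1 * Real.exp (-(2 * (v:ℝ))⁻¹ * x ^ 2)) := by
      funext x; rw [hF, pdf_eq v]; ring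
    rw [h]
    exact (int_pow_exp 1 hb).const_mul _
  have hodd : ∀ x, F (-x) = - F x := by
    intro x
    simp only [hF, pdf_eq v, neg_sq]
    ring
  have hIic : ∫ x in Set.Iic (0:ℝ), F x = - ∫ x in Set.Ioi (0:ℝ), F x := by
    have h1 : ∫ x in Set.Iic (0:ℝ), F (-x) = ∫ x in Set.Ioi (-(0:ℝ)), F x :=
      integral_comp_neg_Iic 0 F
    simp only [neg_zero] at h1
    have h2 : ∫ x in Set.Iic (0:ℝ), F (-x) = - ∫ x in Set.Iic (0:ℝ), F x := by
      simp_rw [hodd]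
      exact integral_neg F
    linarith
  have hsplit : (∫ x in Set.Iic (0:ℝ), F x) + (∫ x in Set.Ioi (0:ℝ), F x) = ∫ x, F x :=
    intervalIntegral.integral_Iic_add_Ioi hFint.integrableOn hFint.integrableOn
  linarith

lemma pi_prod_int {κ : Type*} [Fintype κ] (μ : Measure ℝ) [IsProbabilityMeasure μ]
    (f : κ → ℝ → ℝ) (hf : ∀ t, Integrable (f t) μ) :
    Integrable (fun w : κ → ℝ => ∏ t, f t (w t)) (Measure.pi fun _ => μ) ∧
      ∫ w : κ → ℝ, ∏ t, f t (w t) ∂(Measure.pi fun _ => μ) = ∏ t, ∫ s, f t s ∂μ := by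
  letI : MeasureSpace ℝ := ⟨μ⟩
  exact ⟨Integrable.fintype_prod hf, integral_fintype_prod_eq_prod (fun t => f t)⟩

lemma pi2_prod_int {ι κ : Type*} [Fintype ι] [Fintype κ] (μ : Measure ℝ)
    [IsProbabilityMeasure μ] (f : ι → (κ → ℝ) → ℝ)
    (hf : ∀ i, Integrable (f i) (Measure.pi fun _ : κ => μ)) :
    Integrable (fun y : ι → κ → ℝ => ∏ i, f i (y i))
        (Measure.pi fun _ => Measure.pi fun _ => μ) ∧
      ∫ y : ι → κ → ℝ, ∏ i, f i (y i) ∂(Measure.pi fun _ => Measure.pi fun _ => μ)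
        = ∏ i, ∫ w, f i w ∂(Measure.pi fun _ : κ => μ) := by
  letI : MeasureSpace ℝ := ⟨μ⟩
  exact ⟨Integrable.fintype_prod hf, integral_fintype_prod_eq_prod (fun i => f i)⟩

section Moments

variable {ι κ : Type*} [Fintype ι] [Fintype κ] [DecidableEq ι] [DecidableEq κ]
  (μ : Measure ℝ) [IsProbabilityMeasure μ]
  (h1i : Integrable (fun t : ℝ => t) μ) (h2i : Integrable (fun t : ℝ => t ^ 2) μ)
  (h1 : ∫ t : ℝ, t ∂μ = 0)

include h1i h2i h1

lemma inner_moment (t0 t1 : κ) :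
    Integrable (fun w : κ → ℝ => w t0 * w t1) (Measure.pi fun _ : κ => μ) ∧
      ∫ w : κ → ℝ, w t0 * w t1 ∂(Measure.pi fun _ : κ => μ)
        = if t0 = t1 then ∫ t : ℝ, t ^ 2 ∂μ else 0 := by
  classical
  set f : κ → ℝ → ℝ := fun t s => (if t = t0 then s else 1) * (if t = t1 then s else 1) with hf
  have hsq : Integrable (fun s : ℝ => s * s) μ := by simpa [sq] using h2i
  have hfi : ∀ t, Integrable (f t) μ := by
    intro t
    rcases eq_or_ne t t0 with h0 | h0 <;> rcases eq_or_ne t t1 with h1' | h1' <;>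
      simp only [hf, h0, h1', if_pos rfl, if_neg, ite_true] <;>
      simp_all [h1i, hsq]
  have hprod : (fun w : κ → ℝ => w t0 * w t1) = fun w => ∏ t, f t (w t) := by
    funext w
    rw [hf]
    rw [Finset.prod_mul_distrib]
    congr 1 <;> simp [Finset.prod_ite_eq']
  have h := pi_prod_int μ f hfi
  refine ⟨by rw [hprod]; exact h.1, ?_⟩
  rw [hprod, h.2]
  have hval : ∀ t, (∫ s, f t s ∂μ) =
      if t = t0 then (if t = t1 then ∫ t : ℝ, t ^ 2 ∂μ else 0)
        else (if t = t1 then 0 else 1) := by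
    intro t
    rcases eq_or_ne t t0 with h0 | h0 <;> rcases eq_or_ne t t1 with h1' | h1' <;>
      simp only [hf, h0, h1', if_pos rfl, if_neg, ite_true] <;>
      simp_all [← sq, measure_univ]
  simp_rw [hval]
  by_cases h01 : t0 = t1
  · subst h01
    rw [if_pos rfl]
    have hsimp : ∀ x : κ, (if x = t0 then (if x = t0 then ∫ t : ℝ, t ^ 2 ∂μ else 0)
        else (if x = t0 then 0 else 1)) = if x = t0 then ∫ t : ℝ, t ^ 2 ∂μ else 1 := by
      intro x; by_cases hx : x = t0 <;> simp [hx]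
    simp_rw [hsimp]
    simp [Finset.prod_ite_eq']
  · rw [if_neg h01]
    apply Finset.prod_eq_zero (Finset.mem_univ t0)
    simp [h01, Ne.symm h01]

lemma inner_eval (t0 : κ) :
    Integrable (fun w : κ → ℝ => w t0) (Measure.pi fun _ : κ => μ) ∧
      ∫ w : κ → ℝ, w t0 ∂(Measure.pi fun _ : κ => μ) = 0 := by
  classical
  set f : κ → ℝ → ℝ := fun t s => if t = t0 then s else 1 with hf
  have hfi : ∀ t, Integrable (f t) μ := by
    intro t
    rcases eq_or_ne t t0 with h0 | h0 <;> simp [hf, h0, h1i]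
  have hprod : (fun w : κ → ℝ => w t0) = fun w => ∏ t, f t (w t) := by
    funext w; simp [hf, Finset.prod_ite_eq']
  have h := pi_prod_int μ f hfi
  refine ⟨by rw [hprod]; exact h.1, ?_⟩
  rw [hprod, h.2]
  have hval : ∀ t, (∫ s, f t s ∂μ) = if t = t0 then 0 else 1 := by
    intro t
    rcases eq_or_ne t t0 with h0 | h0 <;> simp [hf, h0, h1, measure_univ]
  simp_rw [hval]
  apply Finset.prod_eq_zero (Finset.mem_univ t0)
  simp

lemma outer_moment (p q : ι × κ) :
    Integrable (fun y : ι → κ → ℝ => y p.1 p.2 * y q.1 q.2)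
        (Measure.pi fun _ : ι => Measure.pi fun _ : κ => μ) ∧
      ∫ y : ι → κ → ℝ, y p.1 p.2 * y q.1 q.2
          ∂(Measure.pi fun _ : ι => Measure.pi fun _ : κ => μ)
        = if p = q then ∫ t : ℝ, t ^ 2 ∂μ else 0 := by
  classical
  set f : ι → (κ → ℝ) → ℝ := fun i w =>
    (if i = p.1 then w p.2 else 1) * (if i = q.1 then w q.2 else 1) with hf
  have hfi : ∀ i, Integrable (f i) (Measure.pi fun _ : κ => μ) := by
    intro i
    rcases eq_or_ne i p.1 with h0 | h0 <;> rcases eq_or_ne i q.1 with h1' | h1' <;>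
      simp only [hf, h0, h1', if_pos rfl, if_neg, ite_true] <;>
      simp_all [(inner_moment μ h1i h2i h1 p.2 q.2).1, (inner_eval μ h1i h2i h1 p.2).1,
        (inner_eval μ h1i h2i h1 q.2).1]
  have hprod : (fun y : ι → κ → ℝ => y p.1 p.2 * y q.1 q.2) = fun y => ∏ i, f i (y i) := by
    funext y
    rw [hf]
    rw [Finset.prod_mul_distrib]
    congr 1 <;> simp [Finset.prod_ite_eq']
  have h := pi2_prod_int μ f hfi
  refine ⟨by rw [hprod]; exact h.1, ?_⟩
  rw [hprod, h.2]
  by_cases hpq1 : p.1 = q.1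
  · have hval : ∀ i, (∫ w, f i w ∂(Measure.pi fun _ : κ => μ)) =
        if i = p.1 then (if p.2 = q.2 then ∫ t : ℝ, t ^ 2 ∂μ else 0) else 1 := by
      intro i
      rcases eq_or_ne i p.1 with h0 | h0
      · have h0' : i = q.1 := h0.trans hpq1
        simp only [hf, h0, h0', if_pos rfl, ite_true]
        simp only [if_pos hpq1]
        have := (inner_moment μ h1i h2i h1 p.2 q.2).2
        simpa using this
      · have h0' : i ≠ q.1 := fun hc => h0 (hc.trans hpq1.symm)
        simp [hf, h0, h0', measure_univ]
    simp_rw [hval]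
    rw [Finset.prod_ite_eq']
    simp only [Finset.mem_univ, if_pos]
    have hpq : (p = q) ↔ (p.2 = q.2) := by
      rw [Prod.ext_iff]; simp [hpq1]
    by_cases h2 : p.2 = q.2
    · rw [if_pos h2, if_pos (hpq.mpr h2)]
    · rw [if_neg h2, if_neg (fun hc => h2 (hpq.mp hc))]
  · have hvalp : (∫ w, f p.1 w ∂(Measure.pi fun _ : κ => μ)) = 0 := by
      simp only [hf, if_pos rfl, if_neg (fun hc : p.1 = q.1 => hpq1 hc)]
      have := (inner_eval μ h1i h2i h1 p.2).2
      simpa using this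
    rw [if_neg (fun hc : p = q => hpq1 (by rw [hc]))]
    exact Finset.prod_eq_zero (Finset.mem_univ p.1) hvalp

lemma key_sq (c : ι × κ → ℝ) :
    Integrable (fun y : ι → κ → ℝ => (∑ p : ι × κ, c p * y p.1 p.2) ^ 2)
        (Measure.pi fun _ : ι => Measure.pi fun _ : κ => μ) ∧
      ∫ y : ι → κ → ℝ, (∑ p : ι × κ, c p * y p.1 p.2) ^ 2
          ∂(Measure.pi fun _ : ι => Measure.pi fun _ : κ => μ)
        = (∫ t : ℝ, t ^ 2 ∂μ) * ∑ p : ι × κ, (c p) ^ 2 := by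
  classical
  have hexp : (fun y : ι → κ → ℝ => (∑ p : ι × κ, c p * y p.1 p.2) ^ 2)
      = fun y => ∑ p : ι × κ, ∑ q : ι × κ, (c p * c q) * (y p.1 p.2 * y q.1 q.2) := by
    funext y
    rw [sq, Finset.sum_mul_sum]
    refine Finset.sum_congr rfl fun p _ => Finset.sum_congr rfl fun q _ => ?_
    ring
  have hint : ∀ p q : ι × κ, Integrable
      (fun y : ι → κ → ℝ => (c p * c q) * (y p.1 p.2 * y q.1 q.2))
      (Measure.pi fun _ : ι => Measure.pi fun _ : κ => μ) :=
    fun p q => ((outer_moment μ h1i h2i h1 p q).1).const_mul _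
  constructor
  · rw [hexp]
    exact integrable_finset_sum _ fun p _ => integrable_finset_sum _ fun q _ => hint p q
  · rw [hexp]
    rw [integral_finset_sum _ fun p _ => integrable_finset_sum _ fun q _ => hint p q]
    have hcol : ∀ p : ι × κ, ∫ y : ι → κ → ℝ,
        (∑ q : ι × κ, (c p * c q) * (y p.1 p.2 * y q.1 q.2))
          ∂(Measure.pi fun _ : ι => Measure.pi fun _ : κ => μ)
        = (c p) ^ 2 * ∫ t : ℝ, t ^ 2 ∂μ := by
      intro p
      rw [integral_finset_sum _ fun q _ => hint p q]
      have : ∀ q : ι × κ, ∫ y : ι → κ → ℝ,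
          (c p * c q) * (y p.1 p.2 * y q.1 q.2)
            ∂(Measure.pi fun _ : ι => Measure.pi fun _ : κ => μ)
          = if p = q then (c p * c q) * ∫ t : ℝ, t ^ 2 ∂μ else 0 := by
        intro q
        rw [integral_const_mul, (outer_moment μ h1i h2i h1 p q).2]
        by_cases hpq : p = q <;> simp [hpq]
      simp_rw [this]
      rw [Finset.sum_ite_eq univ p fun q => (c p * c q) * ∫ t : ℝ, t ^ 2 ∂μ]
      simp [sq]
    simp_rw [hcol]
    rw [← Finset.sum_mul]
    ring

end Moments

/-- for `X` with `XᵀX` invertible, editing matrices `M 1, …, M n`, and mutually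
independent random vectors `E 1, …, E (n+1)` in `ℝ^T` with i.i.d. `N(0,σ²)` coordinates
(mutual independence with the given marginals is expressed by saying that the joint law of the
family is the corresponding product measure), one has
`𝔼[‖(XᵀX)⁻¹ Xᵀ (E 1 + ∑_{i=1}^n M i E (i+1))‖²]
  = σ² tr((XᵀX)⁻¹) + σ² ∑_{i=1}^n tr(X (XᵀX)⁻² Xᵀ M i)`. -/
theorem expected_sq_norm_edited_noise
    (T d n : ℕ) (hT : 0 < T) (hd : 0 < d) (hn : 0 < n) (σ : ℝ) (hσ : 0 < σ)
    (X : Matrix (Fin T) (Fin d) ℝ) (hX : IsUnit (Xᵀ * X).det)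
    (M : ℕ → Matrix (Fin T) (Fin T) ℝ)
    (hM : ∀ i, 1 ≤ i → i ≤ n → IsEditingMatrix (M i))
    {Ω : Type*} [MeasureSpace Ω] [IsProbabilityMeasure (ℙ : Measure Ω)]
    (E : ℕ → Ω → Fin T → ℝ)
    (hEmeas : ∀ i, 1 ≤ i → i ≤ n + 1 → Measurable (E i))
    (hElaw : Measure.map (fun ω (i : Fin (n + 1)) => E (i.1 + 1) ω) ℙ =
      Measure.pi fun _ : Fin (n + 1) =>
        Measure.pi fun _ : Fin T => gaussianReal 0 ⟨σ ^ 2, sq_nonneg σ⟩) :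
    ∫ ω, ∑ j, ((Xᵀ * X)⁻¹ *ᵥ (Xᵀ *ᵥ
        (E 1 ω + ∑ i ∈ Finset.Icc 1 n, (M i) *ᵥ E (i + 1) ω))) j ^ 2 ∂ℙ =
      σ ^ 2 * ((Xᵀ * X)⁻¹).trace +
        σ ^ 2 * ∑ i ∈ Finset.Icc 1 n,
          (X * ((Xᵀ * X)⁻¹ * (Xᵀ * X)⁻¹) * Xᵀ * M i).trace := by
  classical
  set v : ℝ≥0 := ⟨σ ^ 2, sq_nonneg σ⟩ with hvdef
  have hv : v ≠ 0 := by
    intro h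
    have h2 : (v : ℝ) = 0 := by rw [h]; simp
    have h3 : σ ^ 2 = 0 := h2
    exact absurd (pow_eq_zero_iff (n := 2) (by norm_num) |>.mp h3) (ne_of_gt hσ)
  set γ : Measure ℝ := gaussianReal 0 v with hγdef
  set B : Matrix (Fin d) (Fin T) ℝ := (Xᵀ * X)⁻¹ * Xᵀ with hBdef
  set N : Fin (n + 1) → Matrix (Fin T) (Fin T) ℝ :=
    fun i => if i.1 = 0 then 1 else M i.1 with hNdef
  set c : Fin d → (Fin (n + 1) × Fin T) → ℝ :=
    fun j p => (B * N p.1) j p.2 with hcdef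
  set Φ : Ω → Fin (n + 1) → Fin T → ℝ := fun ω (i : Fin (n + 1)) => E (i.1 + 1) ω with hΦdef
  set G : (Fin (n + 1) → Fin T → ℝ) → ℝ :=
    fun y => ∑ j : Fin d, (∑ p : Fin (n + 1) × Fin T, c j p * y p.1 p.2) ^ 2 with hGdef
  -- Step A : rewrite the integrand
  have hstepA : ∀ ω, ∑ j, ((Xᵀ * X)⁻¹ *ᵥ (Xᵀ *ᵥ
      (E 1 ω + ∑ i ∈ Finset.Icc 1 n, (M i) *ᵥ E (i + 1) ω))) j ^ 2 = G (Φ ω) := by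
    intro ω
    have hw : E 1 ω + ∑ i ∈ Finset.Icc 1 n, (M i) *ᵥ E (i + 1) ω
        = ∑ i : Fin (n + 1), N i *ᵥ Φ ω i := by
      rw [Fin.sum_univ_succ]
      have h0 : N 0 *ᵥ Φ ω 0 = E 1 ω := by
        simp [hNdef, hΦdef, Matrix.one_mulVec]
      rw [h0]
      congr 1
      rw [← Finset.Ico_add_one_right_eq_Icc, Finset.sum_Ico_eq_sum_range]
      simp only [Nat.succ_sub_one, Nat.add_sub_cancel]
      rw [← Fin.sum_univ_eq_sum_range (fun i => M (1 + i) *ᵥ E (1 + i + 1) ω) n]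
      refine Finset.sum_congr rfl fun i _ => ?_
      have h1 : (i.succ : Fin (n + 1)).1 = i.1 + 1 := Fin.val_succ i
      simp only [hNdef, hΦdef, h1]
      rw [if_neg (Nat.succ_ne_zero _)]
      have e1 : 1 + i.1 = i.1 + 1 := Nat.add_comm 1 i.1
      rw [e1]
    rw [hw]
    rw [hGdef]
    refine Finset.sum_congr rfl fun j _ => ?_
    congr 1
    rw [Matrix.mulVec_mulVec]
    have hsum : ((Xᵀ * X)⁻¹ * Xᵀ) *ᵥ (∑ i : Fin (n + 1), N i *ᵥ Φ ω i)
        = ∑ i : Fin (n + 1), (B * N i) *ᵥ Φ ω i := by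
      rw [← hBdef]
      have := map_sum (Matrix.mulVecLin B) (fun i => N i *ᵥ Φ ω i) Finset.univ
      simp only [Matrix.mulVecLin_apply] at this
      rw [this]
      exact Finset.sum_congr rfl fun i _ => Matrix.mulVec_mulVec _ _ _
    rw [hsum]
    rw [Finset.sum_apply]
    rw [Fintype.sum_prod_type]
    refine Finset.sum_congr rfl fun i _ => ?_
    simp [Matrix.mulVec, dotProduct, hcdef]
  simp_rw [hstepA]
  -- Step B : change of variables
  have hΦmeas : Measurable Φ := by
    apply measurable_pi_lambda
    intro i
    exact hEmeas (i.1 + 1) (by omega) (by omega)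
  have hGmeas : Measurable G := by
    apply Finset.measurable_sum
    intro j _
    apply Measurable.pow_const
    apply Finset.measurable_sum
    intro p _
    have h1m : Measurable fun y : Fin (n + 1) → Fin T → ℝ => y p.1 := measurable_pi_apply _
    have h2m : Measurable fun w : Fin T → ℝ => w p.2 := measurable_pi_apply _
    exact (h2m.comp h1m).const_mul _
  have hmap : ∫ y, G y ∂(Measure.map Φ ℙ) = ∫ ω, G (Φ ω) ∂ℙ :=
    integral_map hΦmeas.aemeasurable hGmeas.aestronglyMeasurable
  rw [hΦdef] at hmap
  rw [hElaw] at hmap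
  rw [← hmap]
  -- Step C : compute the integral
  have h1i : Integrable (fun t : ℝ => t) γ := by
    simpa using gauss_integrable_pow v hv 1
  have h2i : Integrable (fun t : ℝ => t ^ 2) γ := gauss_integrable_pow v hv 2
  have h1 : ∫ t : ℝ, t ∂γ = 0 := gauss_m1 v hv
  have hm2 : ∫ t : ℝ, t ^ 2 ∂γ = σ ^ 2 := gauss_m2 v hv
  rw [hGdef]
  rw [integral_finset_sum _ fun j _ => (key_sq γ h1i h2i h1 (c j)).1]
  have hkey : ∀ j : Fin d, ∫ y : Fin (n + 1) → Fin T → ℝ,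
      (∑ p : Fin (n + 1) × Fin T, c j p * y p.1 p.2) ^ 2
        ∂(Measure.pi fun _ => Measure.pi fun _ => γ)
      = σ ^ 2 * ∑ p : Fin (n + 1) × Fin T, (c j p) ^ 2 := by
    intro j
    rw [(key_sq γ h1i h2i h1 (c j)).2, hm2]
  simp_rw [hkey]
  -- Step D : algebra
  rw [← Finset.mul_sum]
  have hBt : Bᵀ = X * (Xᵀ * X)⁻¹ := by
    rw [hBdef, Matrix.transpose_mul, Matrix.transpose_transpose,
      Matrix.transpose_nonsing_inv, Matrix.transpose_mul, Matrix.transpose_transpose]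
  have hBB : B * Bᵀ = (Xᵀ * X)⁻¹ := by
    rw [hBt, hBdef]
    have hassoc : (Xᵀ * X)⁻¹ * Xᵀ * (X * (Xᵀ * X)⁻¹)
        = (Xᵀ * X)⁻¹ * (Xᵀ * X) * (Xᵀ * X)⁻¹ := by
      simp only [Matrix.mul_assoc]
    rw [hassoc, Matrix.nonsing_inv_mul _ hX, Matrix.one_mul]
  have htr : ∀ (C : Matrix (Fin d) (Fin T) ℝ), (C * Cᵀ).trace = ∑ j, ∑ t, (C j t) ^ 2 := by
    intro C
    simp [Matrix.trace, Matrix.diag, Matrix.mul_apply, Matrix.transpose_apply, sq]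
  have halg : ∑ j : Fin d, ∑ p : Fin (n + 1) × Fin T, (c j p) ^ 2
      = ((Xᵀ * X)⁻¹).trace
        + ∑ i ∈ Finset.Icc 1 n, (X * ((Xᵀ * X)⁻¹ * (Xᵀ * X)⁻¹) * Xᵀ * M i).trace := by
    have hswap : ∑ j : Fin d, ∑ p : Fin (n + 1) × Fin T, (c j p) ^ 2
        = ∑ i : Fin (n + 1), ((B * N i) * (B * N i)ᵀ).trace := by
      simp_rw [Fintype.sum_prod_type]
      rw [Finset.sum_comm]
      exact Finset.sum_congr rfl fun i _ => (htr (B * N i)).symm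
    rw [hswap, Fin.sum_univ_succ]
    congr 1
    · have hN0 : N (0 : Fin (n + 1)) = 1 := by simp [hNdef]
      rw [hN0, Matrix.mul_one, hBB]
    · rw [← Finset.Ico_add_one_right_eq_Icc, Finset.sum_Ico_eq_sum_range]
      simp only [Nat.succ_sub_one, Nat.add_sub_cancel]
      rw [← Fin.sum_univ_eq_sum_range
        (fun i => (X * ((Xᵀ * X)⁻¹ * (Xᵀ * X)⁻¹) * Xᵀ * M (1 + i)).trace) n]
      refine Finset.sum_congr rfl fun i _ => ?_
      have hk : (i.succ : Fin (n + 1)).1 = i.1 + 1 := Fin.val_succ i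
      have hNsucc : N i.succ = M (i.1 + 1) := by
        simp only [hNdef, hk]
        rw [if_neg (Nat.succ_ne_zero _)]
      obtain ⟨f, hf01, hfeq⟩ := hM (i.1 + 1) (by omega) (by omega)
      have hMMt : M (i.1 + 1) * (M (i.1 + 1))ᵀ = M (i.1 + 1) := by
        rw [hfeq, Matrix.diagonal_transpose, Matrix.diagonal_mul_diagonal]
        have hff : (fun t => f t * f t) = f := by
          funext t; rcases hf01 t with h | h <;> rw [h] <;> norm_num
        rw [hff]
      have e1 : 1 + i.1 = i.1 + 1 := Nat.add_comm 1 i.1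
      rw [e1, hNsucc]
      calc ((B * M (i.1 + 1)) * (B * M (i.1 + 1))ᵀ).trace
          = (B * (M (i.1 + 1) * (M (i.1 + 1))ᵀ) * Bᵀ).trace := by
            rw [Matrix.transpose_mul]
            congr 1
            simp only [Matrix.mul_assoc]
        _ = ((B * M (i.1 + 1)) * Bᵀ).trace := by rw [hMMt, Matrix.mul_assoc]
        _ = (Bᵀ * (B * M (i.1 + 1))).trace := Matrix.trace_mul_comm _ _
        _ = (X * ((Xᵀ * X)⁻¹ * (Xᵀ * X)⁻¹) * Xᵀ * M (i.1 + 1)).trace := by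
            rw [hBt, hBdef]
            congr 1
            simp only [Matrix.mul_assoc]
  rw [halg, mul_add]
end
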